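/- Let T be a tree with diameter 5, and let u, v be adjacent vertices of T such that u is a peripheral vertex of T (i.e., the eccentricity of u equals 5). Then V(T̄) is contained in the convex hull of {ū, v̄} in the complementary prism TT̄. -/

import Mathlib

open SimpleGraph

/-- Adjacency of the complementary prism: copies of `G` and `Gᶜ` joined by a perfect matching. -/
def prismAdj {V : Type*} (G : SimpleGraph V) : V ⊕ V → V ⊕ V → Prop
  | Sum.inl a, Sum.inl b => G.Adj a b
  | Sum.inr a, Sum.inr b => Gᶜ.Adj a b
  | Sum.inl a, Sum.inr b => a = b
  | Sum.inr a, Sum.inl b => a = b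

/-- The complementary prism `G G̅` of a graph `G`. -/
def compPrism {V : Type*} (G : SimpleGraph V) : SimpleGraph (V ⊕ V) where
  Adj := prismAdj G
  symm := by
    refine ⟨?_⟩
    rintro (a | a) (b | b) h
    · exact h.symm
    · exact h.symm
    · exact h.symm
    · exact h.symm
  loopless := by
    refine ⟨?_⟩
    rintro (a | a) h
    · exact G.loopless.irrefl a h
    · exact Gᶜ.loopless.irrefl a h

/-- `w` lies on some shortest `u,v`-path (geodesic) of `H`. -/
def inInterval {V : Type*} (H : SimpleGraph V) (u v w : V) : Prop :=
  ∃ p : H.Walk u v, p.IsPath ∧ p.length = H.dist u v ∧ w ∈ p.support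

/-- A set of vertices is geodesically convex. -/
def IsGeoConvex {V : Type*} (H : SimpleGraph V) (S : Set V) : Prop :=
  ∀ u ∈ S, ∀ v ∈ S, ∀ w, inInterval H u v w → w ∈ S

/-- The geodesic convex hull: the smallest convex set containing `S`. -/
def geoHull {V : Type*} (H : SimpleGraph V) (S : Set V) : Set V :=
  ⋂₀ {C | IsGeoConvex H C ∧ S ⊆ C}

/-- The convexity number: maximum cardinality of a proper convex set. -/
noncomputable def convexityNumber {V : Type*} (H : SimpleGraph V) : ℕ :=
  sSup {n | ∃ S : Set V, IsGeoConvex H S ∧ S ≠ Set.univ ∧ S.ncard = n}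

/-- The diameter of a graph. -/
noncomputable def graphDiam {V : Type*} (H : SimpleGraph V) : ℕ :=
  sSup {d | ∃ u v : V, H.dist u v = d}

/-- The eccentricity of a vertex. -/
noncomputable def graphEcc {V : Type*} (H : SimpleGraph V) (u : V) : ℕ :=
  sSup {d | ∃ v : V, H.dist u v = d}

/-- The degree of a vertex. -/
noncomputable def vdeg {V : Type*} (H : SimpleGraph V) (v : V) : ℕ :=
  (H.neighborSet v).ncard

/-- The maximum degree. -/
noncomputable def maxDeg {V : Type*} (H : SimpleGraph V) : ℕ :=
  sSup {d | ∃ v : V, vdeg H v = d}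

/-- The number of pendant neighbours of a vertex. -/
noncomputable def pendCount {V : Type*} (H : SimpleGraph V) (w : V) : ℕ :=
  {v ∈ H.neighborSet w | vdeg H v = 1}.ncard


open SimpleGraph Walk in
lemma exists_walk_to_getVert {V : Type*} {G : SimpleGraph V} {u v : V} (p : G.Walk u v)
    (i : ℕ) : ∃ q : G.Walk u (p.getVert i), q.length ≤ i := by
  induction p generalizing i with
  | nil => exact ⟨Walk.nil, Nat.zero_le _⟩
  | @cons a b c h q ih =>
    cases i with
    | zero => exact ⟨Walk.nil, le_refl _⟩
    | succ n =>
      obtain ⟨q', hq'⟩ := ih n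
      exact ⟨Walk.cons h q', by simpa using Nat.succ_le_succ hq'⟩

open SimpleGraph Walk in
lemma exists_walk_from_getVert {V : Type*} {G : SimpleGraph V} {u v : V} (p : G.Walk u v)
    (i : ℕ) : ∃ q : G.Walk (p.getVert i) v, q.length ≤ p.length - i := by
  induction p generalizing i with
  | nil => exact ⟨Walk.nil, Nat.zero_le _⟩
  | @cons a b c h q ih =>
    cases i with
    | zero => exact ⟨Walk.cons h q, le_refl _⟩
    | succ n =>
      obtain ⟨q', hq'⟩ := ih n
      exact ⟨q', by simpa using hq'⟩

open SimpleGraph in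
lemma dist_getVert_le {V : Type*} {G : SimpleGraph V} {u v : V} (p : G.Walk u v) (i : ℕ) :
    G.dist u (p.getVert i) ≤ i := by
  obtain ⟨q, hq⟩ := exists_walk_to_getVert p i
  exact le_trans (SimpleGraph.dist_le q) hq

open SimpleGraph in
lemma dist_getVert_le' {V : Type*} {G : SimpleGraph V} {u v : V} (p : G.Walk u v) (i : ℕ) :
    G.dist (p.getVert i) v ≤ p.length - i := by
  obtain ⟨q, hq⟩ := exists_walk_from_getVert p i
  exact le_trans (SimpleGraph.dist_le q) hq

open SimpleGraph in
/-- If `a ~ b` in `T` and `w` is a non-vertex distinct non-neighbor of both in `T`,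
then `inr w` lies on a geodesic between `inr a` and `inr b` in the prism. -/
lemma mid_mem {V : Type*} {T : SimpleGraph V} {C : Set (V ⊕ V)}
    (hC : IsGeoConvex (compPrism T) C) {a b w : V}
    (ha : Sum.inr a ∈ C) (hb : Sum.inr b ∈ C) (hab : T.Adj a b)
    (haw : a ≠ w) (haw' : ¬ T.Adj a w) (hwb : w ≠ b) (hwb' : ¬ T.Adj w b) :
    Sum.inr w ∈ C := by
  set H := compPrism T with hH
  have h1 : H.Adj (Sum.inr a) (Sum.inr w) := by
    show Tᶜ.Adj a w
    exact ⟨haw, haw'⟩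
  have h2 : H.Adj (Sum.inr w) (Sum.inr b) := by
    show Tᶜ.Adj w b
    exact ⟨hwb, hwb'⟩
  have hnadj : ¬ H.Adj (Sum.inr a) (Sum.inr b) := by
    intro h
    exact (h : Tᶜ.Adj a b).2 hab
  have hne : (Sum.inr a : V ⊕ V) ≠ Sum.inr b := by
    simp only [ne_eq, Sum.inr.injEq]
    exact hab.ne
  let W : H.Walk (Sum.inr a) (Sum.inr b) := Walk.cons h1 (Walk.cons h2 Walk.nil)
  have hlen : W.length = 2 := rfl
  have hreach : H.Reachable (Sum.inr a) (Sum.inr b) := ⟨W⟩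
  have hdist : H.dist (Sum.inr a) (Sum.inr b) = 2 := by
    have hle : H.dist (Sum.inr a) (Sum.inr b) ≤ 2 := hlen ▸ SimpleGraph.dist_le W
    have h0 : H.dist (Sum.inr a) (Sum.inr b) ≠ 0 := by
      simp [SimpleGraph.dist_eq_zero_iff_eq_or_not_reachable, hne, hreach]
    have h1' : H.dist (Sum.inr a) (Sum.inr b) ≠ 1 := fun h =>
      hnadj (SimpleGraph.dist_eq_one_iff_adj.mp h)
    omega
  refine hC _ ha _ hb _ ⟨W, ?_, by rw [hlen, hdist], ?_⟩
  · exact W.isPath_of_length_eq_dist (by rw [hlen, hdist])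
  · simp [W, Walk.support_cons]

theorem stmt4 {V : Type*} [Fintype V] (T : SimpleGraph V) (hT : T.IsTree)
    (hd : graphDiam T = 5) (u v : V) (huv : T.Adj u v) (hper : graphEcc T u = 5) :
    Set.range Sum.inr ⊆ geoHull (compPrism T) {Sum.inr u, Sum.inr v} := by
  classical
  -- obtain a vertex x at distance 5 from u
  have hx : ∃ x : V, T.dist u x = 5 := by
    have hfin : ({d | ∃ w : V, T.dist u w = d} : Set ℕ).Finite := by
      have : {d | ∃ w : V, T.dist u w = d} = Set.range (T.dist u) := by
        ext d; simp [eq_comm]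
      rw [this]
      exact Set.finite_range _
    have hne : ({d | ∃ w : V, T.dist u w = d} : Set ℕ).Nonempty := ⟨_, u, rfl⟩
    have := hne.csSup_mem hfin
    rw [show sSup {d | ∃ w : V, T.dist u w = d} = graphEcc T u from rfl, hper] at this
    exact this
  obtain ⟨x, hux⟩ := hx
  have hconn : T.Connected := hT.isConnected
  obtain ⟨p, hp⟩ := hconn.exists_walk_length_eq_dist u x
  have hplen : p.length = 5 := by rw [hp, hux]
  -- key vertices
  set c : V := p.getVert 4 with hc
  have hgx : p.getVert 5 = x := by
    rw [← hplen]; exact p.getVert_length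
  -- distances from u
  have hdistu : ∀ i : ℕ, i ≤ 5 → T.dist u (p.getVert i) = i := by
    intro i hi
    have h1 : T.dist u (p.getVert i) ≤ i := dist_getVert_le p i
    have h2 : T.dist (p.getVert i) x ≤ 5 - i := by
      have := dist_getVert_le' p i
      rwa [hplen] at this
    have h3 : T.dist u x ≤ T.dist u (p.getVert i) + T.dist (p.getVert i) x :=
      hconn.dist_triangle
    omega
  have hduc : T.dist u c = 4 := hdistu 4 (by omega)
  have hdux : T.dist u x = 5 := hux
  have hduv : T.dist u v = 1 := SimpleGraph.dist_eq_one_iff_adj.mpr huv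
  have hdvc : 3 ≤ T.dist v c := by
    have h3 : T.dist u c ≤ T.dist u v + T.dist v c := hconn.dist_triangle
    omega
  have hdvx : 4 ≤ T.dist v x := by
    have h3 : T.dist u x ≤ T.dist u v + T.dist v x := hconn.dist_triangle
    omega
  have hcx : T.Adj c x := by
    have := p.adj_getVert_succ (i := 4) (by omega)
    rwa [hgx] at this
  -- helper facts for nonadjacency via distance
  have hadj_dist : ∀ a b : V, T.Adj a b → T.dist a b = 1 := by
    intro a b h; exact SimpleGraph.dist_eq_one_iff_adj.mpr h
  have hne_dist : ∀ a b : V, T.dist a b ≠ 0 → a ≠ b := by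
    intro a b h hab; exact h (by rw [hab]; exact SimpleGraph.dist_self)
  rintro z ⟨w, rfl⟩
  intro C hC
  obtain ⟨hconv, hsub⟩ := hC
  have hu : Sum.inr u ∈ C := hsub (Or.inl rfl)
  have hv : Sum.inr v ∈ C := hsub (Or.inr rfl)
  -- c and x are in C via geodesics between inr u and inr v
  have hcC : Sum.inr c ∈ C := by
    refine mid_mem hconv hu hv huv ?_ ?_ ?_ ?_
    · exact hne_dist u c (by omega)
    · intro h; have := hadj_dist u c h; omega
    · intro h; rw [h] at hdvc; rw [SimpleGraph.dist_comm] at hdvc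
      simp [SimpleGraph.dist_self] at hdvc
    · intro h; have := hadj_dist v c h.symm; omega
  have hxC : Sum.inr x ∈ C := by
    refine mid_mem hconv hu hv huv ?_ ?_ ?_ ?_
    · exact hne_dist u x (by omega)
    · intro h; have := hadj_dist u x h; omega
    · intro h; rw [h] at hdvx; rw [SimpleGraph.dist_comm] at hdvx
      simp [SimpleGraph.dist_self] at hdvx
    · intro h; have := hadj_dist v x h.symm; omega
  -- now handle arbitrary w
  by_cases hwu : w = u
  · rwa [hwu]
  by_cases hwv : w = v
  · rwa [hwv]
  by_cases hA : ¬ T.Adj u w ∧ ¬ T.Adj v w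
  · exact mid_mem hconv hu hv huv (Ne.symm hwu) hA.1 hwv (fun h => hA.2 h.symm)
  · push_neg at hA
    -- w is adjacent (in T) to u or to v; then w is far from both c and x
    have key : T.dist u w = 1 ∨ T.dist v w = 1 := by
      by_cases h : T.Adj u w
      · exact Or.inl (hadj_dist u w h)
      · exact Or.inr (hadj_dist v w (hA h))
    refine mid_mem hconv hcC hxC hcx ?_ ?_ ?_ ?_
    · rcases key with h | h
      · intro hcw; rw [← hcw] at h; omega
      · intro hcw; rw [← hcw] at h; omega
    · intro hadj
      have h1 := hadj_dist c w hadj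
      rcases key with h | h
      · have := hconn.dist_triangle (u := u) (v := w) (w := c)
        rw [SimpleGraph.dist_comm (u := w) (v := c)] at this
        omega
      · have := hconn.dist_triangle (u := v) (v := w) (w := c)
        rw [SimpleGraph.dist_comm (u := w) (v := c)] at this
        omega
    · rcases key with h | h
      · intro hwx; rw [hwx] at h; omega
      · intro hwx; rw [hwx] at h; omega
    · intro hadj
      have h1 := hadj_dist w x hadj
      rcases key with h | h
      · have := hconn.dist_triangle (u := u) (v := w) (w := x)
        omega
      · have := hconn.dist_triangle (u := v) (v := w) (w := x)
        omega
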